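/- arXiv:1603.01357 — 2 statements merged into one kernel-verified Lean document; each statement's English description precedes it below -/
import Mathlib

section
/- Let X_1,…,X_n be points in ℝ^d and let X ∈ ℝ^d. For k = 1,…,n let c_k(X) denote the number of subsets I ⊆ {1,…,n} with #I = k such that X ∈ conv(X_i : i ∈ I). Then Σ_{k=1}^{n} (−1)^{k−1} c_k(X) equals (−1)^{dim Π} if X lies in the relative interior of Π, and equals 0 if X does not lie in the relative interior of Π, where Π = conv(X_1,…,X_n). -/
open scoped Classical
open Pointwise

/-- The dimension of a set: the dimension of its affine hull. -/
noncomputable def adim {d : ℕ} (s : Set (EuclideanSpace ℝ (Fin d))) : ℕ :=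
  Module.finrank ℝ (affineSpan ℝ s).direction

open scoped RealInnerProductSpace

namespace CowanAux

noncomputable section

variable {d : ℕ}

local notation "V" => EuclideanSpace ℝ (Fin d)

/-- Indicator of a proposition. -/
def ind (P : Prop) : ℤ := if P then 1 else 0

lemma ind_of (P : Prop) (h : P) : ind P = 1 := if_pos h
lemma ind_of_not (P : Prop) (h : ¬ P) : ind P = 0 := if_neg h
lemma ind_congr {P Q : Prop} (h : P ↔ Q) : ind P = ind Q := by
  by_cases hP : P
  · rw [ind_of _ hP, ind_of _ (h.mp hP)]
  · rw [ind_of_not _ hP, ind_of_not _ (fun hq => hP (h.mpr hq))]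

/-- The open cone of functionals positive on `Y i`, `i ∈ T`. -/
def CT {ι : Type} (Y : ι → V) (T : Finset ι) : Set V := {a | ∀ i ∈ T, 0 < ⟪Y i, a⟫}

lemma CT_empty {ι : Type} (Y : ι → V) : CT Y (∅ : Finset ι) = Set.univ := by
  ext a; simp [CT]

lemma CT_insert {ι : Type} [DecidableEq ι] (Y : ι → V) (T : Finset ι) (j : ι) :
    CT Y (insert j T) = CT Y T ∩ {a | 0 < ⟪Y j, a⟫} := by
  ext a
  simp only [CT, Set.mem_inter_iff, Set.mem_setOf_eq, Finset.mem_insert]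
  constructor
  · intro h; exact ⟨fun i hi => h i (Or.inr hi), h j (Or.inl rfl)⟩
  · rintro ⟨h1, h2⟩ i (rfl | hi)
    · exact h2
    · exact h1 i hi

lemma isOpen_pos_inner (z : V) : IsOpen {a : V | 0 < ⟪z, a⟫} :=
  isOpen_lt continuous_const (continuous_const.inner continuous_id)

lemma isOpen_neg_inner (z : V) : IsOpen {a : V | ⟪z, a⟫ < 0} :=
  isOpen_lt (continuous_const.inner continuous_id) continuous_const

lemma isLinearMap_inner (z : V) : IsLinearMap ℝ (fun a : V => ⟪z, a⟫) :=
  ⟨fun a b => inner_add_right z a b, fun c a => real_inner_smul_right z a c⟩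

lemma convex_pos_inner (z : V) : Convex ℝ {a : V | 0 < ⟪z, a⟫} :=
  convex_halfSpace_gt (isLinearMap_inner z) 0

lemma convex_neg_inner (z : V) : Convex ℝ {a : V | ⟪z, a⟫ < 0} :=
  convex_halfSpace_lt (isLinearMap_inner z) 0

lemma convex_zero_inner (z : V) : Convex ℝ {a : V | ⟪z, a⟫ = 0} :=
  convex_hyperplane (isLinearMap_inner z) 0

lemma CT_isOpen {ι : Type} (Y : ι → V) (T : Finset ι) : IsOpen (CT Y T) := by
  have : CT Y T = ⋂ i ∈ T, {a : V | 0 < ⟪Y i, a⟫} := by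
    ext a; simp [CT]
  rw [this]
  exact isOpen_biInter_finset fun i _ => isOpen_pos_inner (Y i)

lemma CT_convex {ι : Type} (Y : ι → V) (T : Finset ι) : Convex ℝ (CT Y T) := by
  have : CT Y T = ⋂ i ∈ T, {a : V | 0 < ⟪Y i, a⟫} := by
    ext a; simp [CT]
  rw [this]
  exact convex_iInter fun i => convex_iInter fun _ => convex_pos_inner (Y i)

/-- The master alternating sum. -/
def ES {ι : Type} [DecidableEq ι] (G : Finset ι) (Y : ι → V) (Ω : Set V) : ℤ :=
  ∑ T ∈ G.powerset, (-1) ^ T.card * ind ((Ω ∩ CT Y T).Nonempty)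

lemma ES_congr {ι : Type} [DecidableEq ι] (G : Finset ι) (Y Y' : ι → V) (Ω Ω' : Set V)
    (h : ∀ T ∈ G.powerset, ((Ω ∩ CT Y T).Nonempty ↔ (Ω' ∩ CT Y' T).Nonempty)) :
    ES G Y Ω = ES G Y' Ω' :=
  Finset.sum_congr rfl fun T hT => by rw [ind_congr (h T hT)]

lemma ES_of_empty {ι : Type} [DecidableEq ι] (G : Finset ι) (Y : ι → V) (Ω : Set V)
    (h : Ω = ∅) : ES G Y Ω = 0 := by
  subst h
  refine Finset.sum_eq_zero fun T _ => ?_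
  rw [ind_of_not, mul_zero]
  rintro ⟨a, ha, -⟩
  exact ha




/-- relative openness property of a set along a submodule of directions -/
def RelOpen (W : Submodule ℝ V) (Q : Set V) : Prop :=
  ∀ q ∈ Q, ∀ w ∈ W, ∃ ε > (0:ℝ), ∀ t : ℝ, |t| < ε → q + t • w ∈ Q

lemma relOpen_open_inter (O : Set V) (hO : IsOpen O) (A : AffineSubspace ℝ V) :
    RelOpen A.direction (O ∩ (A : Set V)) := by
  rintro q ⟨hqO, hqA⟩ w hw
  have hcont : Continuous (fun t : ℝ => q + t • w) := by continuity
  have h0 : (fun t : ℝ => q + t • w) 0 ∈ O := by simpa using hqO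
  have hpre : IsOpen ((fun t : ℝ => q + t • w) ⁻¹' O) := hO.preimage hcont
  obtain ⟨ε, hε, hball⟩ := Metric.isOpen_iff.mp hpre 0 h0
  refine ⟨ε, hε, fun t ht => ?_⟩
  constructor
  · exact hball (by simpa [Real.dist_eq] using ht)
  · have : (t • w) +ᵥ q ∈ A :=
      AffineSubspace.vadd_mem_of_mem_direction (A.direction.smul_mem t hw) hqA
    simpa [add_comm] using this

theorem fourIdentity (W : Submodule ℝ V) (Q : Set V) (hQc : Convex ℝ Q)
    (hQr : RelOpen W Q) (z : V) (hz : ∃ v ∈ W, ⟪z, v⟫ ≠ 0) :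
    ind Q.Nonempty + ind ((Q ∩ {a | ⟪z, a⟫ = 0}).Nonempty)
      = ind ((Q ∩ {a | 0 < ⟪z, a⟫}).Nonempty)
        + ind ((Q ∩ {a | ⟪z, a⟫ < 0}).Nonempty) := by
  by_cases hne : Q.Nonempty
  · by_cases h0 : (Q ∩ {a | ⟪z, a⟫ = 0}).Nonempty
    · -- both sides are 2
      obtain ⟨q₀, hq₀Q, hq₀z⟩ := h0
      obtain ⟨v, hvW, hvz⟩ := hz
      obtain ⟨ε, hε, hball⟩ := hQr q₀ hq₀Q v hvW
      have hmem : ∀ t : ℝ, |t| < ε → q₀ + t • v ∈ Q := hball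
      have hval : ∀ t : ℝ, ⟪z, q₀ + t • v⟫ = t * ⟪z, v⟫ := by
        intro t
        rw [inner_add_right, real_inner_smul_right]
        simp only [Set.mem_setOf_eq] at hq₀z
        rw [hq₀z, zero_add]
      have ht2 : |ε/2| < ε := by rw [abs_of_pos (by linarith)]; linarith
      have ht2' : |-(ε/2)| < ε := by rw [abs_neg, abs_of_pos (by linarith)]; linarith
      have hppos : (0:ℝ) < ε/2 := by linarith
      have hpos : (Q ∩ {a | 0 < ⟪z, a⟫}).Nonempty := by
        rcases lt_or_gt_of_ne hvz with hneg | hposv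
        · exact ⟨q₀ + (-(ε/2)) • v, hmem _ ht2', by
            simp only [Set.mem_setOf_eq, hval]; nlinarith⟩
        · exact ⟨q₀ + (ε/2) • v, hmem _ ht2, by
            simp only [Set.mem_setOf_eq, hval]; nlinarith⟩
      have hneg : (Q ∩ {a | ⟪z, a⟫ < 0}).Nonempty := by
        rcases lt_or_gt_of_ne hvz with hnegv | hposv
        · exact ⟨q₀ + (ε/2) • v, hmem _ ht2, by
            simp only [Set.mem_setOf_eq, hval]; nlinarith⟩
        · exact ⟨q₀ + (-(ε/2)) • v, hmem _ ht2', by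
            simp only [Set.mem_setOf_eq, hval]; nlinarith⟩
      rw [ind_of _ hne, ind_of _ ⟨q₀, hq₀Q, hq₀z⟩,
        ind_of _ hpos, ind_of _ hneg]
    · -- no zero point: exactly one side nonempty
      have hnotboth : ¬ ((Q ∩ {a | 0 < ⟪z, a⟫}).Nonempty ∧ (Q ∩ {a | ⟪z, a⟫ < 0}).Nonempty) := by
        rintro ⟨⟨qp, hqpQ, hqpz⟩, ⟨qn, hqnQ, hqnz⟩⟩
        simp only [Set.mem_setOf_eq] at hqpz hqnz
        set cp := ⟪z, qp⟫ with hcp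
        set cn := ⟪z, qn⟫ with hcn
        set t : ℝ := -cn / (cp - cn) with htdef
        have hden : (0:ℝ) < cp - cn := by linarith
        have ht0 : 0 < t := div_pos (by linarith) hden
        have ht1 : t < 1 := by
          rw [htdef, div_lt_one hden]; linarith
        have hmem : t • qp + (1 - t) • qn ∈ Q :=
          hQc hqpQ hqnQ (le_of_lt ht0) (by linarith) (by ring)
        refine h0 ⟨t • qp + (1 - t) • qn, hmem, ?_⟩
        show ⟪z, t • qp + (1 - t) • qn⟫ = 0
        rw [inner_add_right, real_inner_smul_right, real_inner_smul_right, ← hcp, ← hcn, htdef]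
        field_simp
        ring
      have hone : (Q ∩ {a | 0 < ⟪z, a⟫}).Nonempty ∨ (Q ∩ {a | ⟪z, a⟫ < 0}).Nonempty := by
        obtain ⟨q, hq⟩ := hne
        rcases lt_trichotomy (⟪z, q⟫) 0 with h | h | h
        · exact Or.inr ⟨q, hq, h⟩
        · exact absurd ⟨q, hq, h⟩ h0
        · exact Or.inl ⟨q, hq, h⟩
      rw [ind_of _ hne, ind_of_not _ h0]
      rcases hone with hp | hn
      · rw [ind_of _ hp, ind_of_not _ (fun hn' => hnotboth ⟨hp, hn'⟩)]
      · rw [ind_of_not _ (fun hp' => hnotboth ⟨hp', hn⟩), ind_of _ hn]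
        ring
  · -- Q empty
    have h1 : ¬ (Q ∩ {a | ⟪z, a⟫ = 0}).Nonempty := fun ⟨a, ha, _⟩ => hne ⟨a, ha⟩
    have h2 : ¬ (Q ∩ {a | 0 < ⟪z, a⟫}).Nonempty := fun ⟨a, ha, _⟩ => hne ⟨a, ha⟩
    have h3 : ¬ (Q ∩ {a | ⟪z, a⟫ < 0}).Nonempty := fun ⟨a, ha, _⟩ => hne ⟨a, ha⟩
    rw [ind_of_not _ hne, ind_of_not _ h1, ind_of_not _ h2,
      ind_of_not _ h3]


theorem K3 {ι : Type} [DecidableEq ι] :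
    ∀ (M k : ℕ) (G : Finset ι) (Y : ι → V) (A : AffineSubspace ℝ V) (Ω : Set V),
      k + G.card ≤ M →
      Module.finrank ℝ A.direction ≤ k →
      IsOpen Ω → Convex ℝ Ω →
      (∀ a ∈ Ω ∩ (A : Set V), ∃ i ∈ G, 0 < ⟪Y i, a⟫) →
      ES G Y (Ω ∩ (A : Set V)) = 0 := by
  intro M
  induction M with
  | zero =>
    intro k G Y A Ω hM hk hΩo hΩc hcov
    have hG : G = ∅ := Finset.card_eq_zero.mp (by omega)
    subst hG
    refine ES_of_empty _ _ _ ?_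
    ext a
    simp only [Set.mem_empty_iff_false, iff_false]
    intro ha
    obtain ⟨i, hi, -⟩ := hcov a ha
    exact absurd hi (Finset.notMem_empty i)
  | succ M ih =>
    intro k G Y A Ω hM hk hΩo hΩc hcov
    by_cases hGe : G = ∅
    · subst hGe
      refine ES_of_empty _ _ _ ?_
      ext a
      simp only [Set.mem_empty_iff_false, iff_false]
      intro ha
      obtain ⟨i, hi, -⟩ := hcov a ha
      exact absurd hi (Finset.notMem_empty i)
    obtain ⟨j, hj⟩ := Finset.nonempty_iff_ne_empty.mpr hGe
    set G' : Finset ι := G.erase j with hG'def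
    have hjG' : j ∉ G' := Finset.notMem_erase j G
    have hins : G = insert j G' := (Finset.insert_erase hj).symm
    have hcard : G.card = G'.card + 1 := by
      rw [hins, Finset.card_insert_of_notMem hjG']
    by_cases hQne : (Ω ∩ (A : Set V)).Nonempty
    swap
    · exact ES_of_empty _ _ _ (Set.not_nonempty_iff_eq_empty.mp hQne)
    obtain ⟨p, hpΩ, hpA⟩ := hQne
    have hjT : ∀ T ∈ G'.powerset, j ∉ T := by
      intro T hT hjmem
      exact hjG' (Finset.mem_powerset.mp hT hjmem)
    rw [ES, hins, Finset.sum_powerset_insert hjG']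
    by_cases hconst : ∀ v ∈ A.direction, ⟪Y j, v⟫ = 0
    · -- `⟪Y j, ·⟫` is constant on `A`
      have hval : ∀ a ∈ (A : Set V), ⟪Y j, a⟫ = ⟪Y j, p⟫ := by
        intro a ha
        have hd : a -ᵥ p ∈ A.direction := AffineSubspace.vsub_mem_direction ha hpA
        have := hconst _ hd
        rw [vsub_eq_sub, inner_sub_right] at this
        linarith
      by_cases hpos : 0 < ⟪Y j, p⟫
      · -- the two sums cancel
        have hcongr : ∀ T ∈ G'.powerset,
            (-1 : ℤ) ^ (insert j T).card * ind (((Ω ∩ (A : Set V)) ∩ CT Y (insert j T)).Nonempty)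
            = -((-1 : ℤ) ^ T.card * ind (((Ω ∩ (A : Set V)) ∩ CT Y T).Nonempty)) := by
          intro T hT
          have hcins : (insert j T).card = T.card + 1 :=
            Finset.card_insert_of_notMem (hjT T hT)
          have hiff : ((Ω ∩ (A : Set V)) ∩ CT Y (insert j T)).Nonempty ↔
              ((Ω ∩ (A : Set V)) ∩ CT Y T).Nonempty := by
            constructor
            · rintro ⟨a, haS, haCT⟩
              rw [CT_insert] at haCT
              exact ⟨a, haS, haCT.1⟩
            · rintro ⟨a, haS, haCT⟩
              refine ⟨a, haS, ?_⟩
              rw [CT_insert]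
              refine ⟨haCT, ?_⟩
              have := hval a haS.2
              simp only [Set.mem_setOf_eq]
              rw [this]
              exact hpos
          rw [ind_congr hiff, hcins, pow_succ]
          ring
        rw [Finset.sum_congr rfl hcongr, Finset.sum_neg_distrib]
        ring
      · -- `⟪Y j, ·⟫ ≤ 0` on `A` : terms containing `j` vanish
        have hz2 : ∀ T ∈ G'.powerset,
            (-1 : ℤ) ^ (insert j T).card * ind (((Ω ∩ (A : Set V)) ∩ CT Y (insert j T)).Nonempty)
              = 0 := by
          intro T hT
          rw [ind_of_not, mul_zero]
          rintro ⟨a, haS, haCT⟩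
          rw [CT_insert] at haCT
          have := hval a haS.2
          have h2 := haCT.2
          simp only [Set.mem_setOf_eq] at h2
          rw [this] at h2
          exact hpos h2
        rw [Finset.sum_congr rfl hz2, Finset.sum_const_zero, add_zero]
        have hcov' : ∀ a ∈ Ω ∩ (A : Set V), ∃ i ∈ G', 0 < ⟪Y i, a⟫ := by
          intro a ha
          obtain ⟨i, hiG, hipos⟩ := hcov a ha
          refine ⟨i, Finset.mem_erase.mpr ⟨?_, hiG⟩, hipos⟩
          rintro rfl
          rw [hval a ha.2] at hipos
          exact hpos hipos
        exact ih k G' Y A Ω (by omega) hk hΩo hΩc hcov'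
    · push_neg at hconst
      obtain ⟨v, hvW, hvz⟩ := hconst
      -- per-`T` four-set identity
      have hkey : ∀ T ∈ G'.powerset,
          (-1 : ℤ) ^ T.card * ind (((Ω ∩ (A : Set V)) ∩ CT Y T).Nonempty)
            + (-1 : ℤ) ^ (insert j T).card *
                ind (((Ω ∩ (A : Set V)) ∩ CT Y (insert j T)).Nonempty)
          = (-1 : ℤ) ^ T.card * ind ((((Ω ∩ {a | ⟪Y j, a⟫ < 0}) ∩ (A : Set V)) ∩ CT Y T).Nonempty)
            - (-1 : ℤ) ^ T.card *
                ind (((Ω ∩ ({a | ⟪Y j, a⟫ = 0} ∩ (A : Set V))) ∩ CT Y T).Nonempty) := by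
        intro T hT
        have hcins : (insert j T).card = T.card + 1 := Finset.card_insert_of_notMem (hjT T hT)
        set Q : Set V := (Ω ∩ CT Y T) ∩ (A : Set V) with hQdef
        have hQc : Convex ℝ Q := ((hΩc.inter (CT_convex Y T)).inter (A.convex))
        have hQr : RelOpen A.direction Q := relOpen_open_inter _ (hΩo.inter (CT_isOpen Y T)) A
        have h4 := fourIdentity A.direction Q hQc hQr (Y j) ⟨v, hvW, hvz⟩
        have e0 : (Ω ∩ (A : Set V)) ∩ CT Y T = Q := by
          rw [hQdef]; ext a; simp only [Set.mem_inter_iff]; tauto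
        have ep : (Ω ∩ (A : Set V)) ∩ CT Y (insert j T) = Q ∩ {a | 0 < ⟪Y j, a⟫} := by
          rw [hQdef, CT_insert]; ext a; simp only [Set.mem_inter_iff]; tauto
        have en : ((Ω ∩ {a | ⟪Y j, a⟫ < 0}) ∩ (A : Set V)) ∩ CT Y T
            = Q ∩ {a | ⟪Y j, a⟫ < 0} := by
          rw [hQdef]; ext a; simp only [Set.mem_inter_iff]; tauto
        have ez : (Ω ∩ ({a | ⟪Y j, a⟫ = 0} ∩ (A : Set V))) ∩ CT Y T
            = Q ∩ {a | ⟪Y j, a⟫ = 0} := by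
          rw [hQdef]; ext a; simp only [Set.mem_inter_iff]; tauto
        rw [e0, ep, en, ez, hcins, pow_succ]
        have : ind (Q.Nonempty) - ind ((Q ∩ {a | 0 < ⟪Y j, a⟫}).Nonempty)
            = ind ((Q ∩ {a | ⟪Y j, a⟫ < 0}).Nonempty)
              - ind ((Q ∩ {a | ⟪Y j, a⟫ = 0}).Nonempty) := by linarith
        linear_combination ((-1:ℤ) ^ T.card) * this
      rw [← Finset.sum_add_distrib]
      rw [Finset.sum_congr rfl hkey, Finset.sum_sub_distrib]
      -- first sum vanishes by induction with smaller ground set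
      have h1 : (∑ T ∈ G'.powerset, (-1 : ℤ) ^ T.card *
          ind ((((Ω ∩ {a | ⟪Y j, a⟫ < 0}) ∩ (A : Set V)) ∩ CT Y T).Nonempty)) = 0 := by
        have hcov' : ∀ a ∈ (Ω ∩ {a | ⟪Y j, a⟫ < 0}) ∩ (A : Set V), ∃ i ∈ G', 0 < ⟪Y i, a⟫ := by
          rintro a ⟨⟨haΩ, haneg⟩, haA⟩
          obtain ⟨i, hiG, hipos⟩ := hcov a ⟨haΩ, haA⟩
          refine ⟨i, Finset.mem_erase.mpr ⟨?_, hiG⟩, hipos⟩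
          rintro rfl
          simp only [Set.mem_setOf_eq] at haneg
          linarith
        exact ih k G' Y A (Ω ∩ {a | ⟪Y j, a⟫ < 0}) (by omega) hk
          (hΩo.inter (isOpen_neg_inner (Y j))) (hΩc.inter (convex_neg_inner (Y j))) hcov'
      -- second sum vanishes by induction with smaller affine subspace
      have h2 : (∑ T ∈ G'.powerset, (-1 : ℤ) ^ T.card *
          ind (((Ω ∩ ({a | ⟪Y j, a⟫ = 0} ∩ (A : Set V))) ∩ CT Y T).Nonempty)) = 0 := by
        set A' : AffineSubspace ℝ V := A ⊓ AffineSubspace.mk' 0 (ℝ ∙ (Y j))ᗮ with hA'def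
        have hA'coe : (A' : Set V) = {a | ⟪Y j, a⟫ = 0} ∩ (A : Set V) := by
          ext a
          simp only [hA'def, SetLike.mem_coe, AffineSubspace.mem_inf_iff, Set.mem_inter_iff,
            Set.mem_setOf_eq, AffineSubspace.mem_mk', vsub_eq_sub, sub_zero,
            Submodule.mem_orthogonal_singleton_iff_inner_right]
          tauto
        rw [show (Ω ∩ ({a | ⟪Y j, a⟫ = 0} ∩ (A : Set V))) = Ω ∩ (A' : Set V) by rw [hA'coe]]
        by_cases hne' : (Ω ∩ (A' : Set V)).Nonempty
        swap
        · refine Finset.sum_eq_zero fun T _ => ?_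
          rw [ind_of_not, mul_zero]
          rintro ⟨a, haS, -⟩
          exact hne' ⟨a, haS⟩
        obtain ⟨p', hp'Ω, hp'A'⟩ := hne'
        have hp'A : p' ∈ A := ((AffineSubspace.mem_inf_iff p' _ _).mp hp'A').1
        have hp'mk : p' ∈ AffineSubspace.mk' (0:V) (ℝ ∙ (Y j))ᗮ :=
          ((AffineSubspace.mem_inf_iff p' _ _).mp hp'A').2
        have hdir : A'.direction = A.direction ⊓ (ℝ ∙ (Y j))ᗮ := by
          rw [hA'def, AffineSubspace.direction_inf_of_mem hp'A hp'mk,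
            AffineSubspace.direction_mk']
        have hlt : A'.direction < A.direction := by
          rw [hdir]
          refine lt_of_le_of_ne inf_le_left ?_
          intro heq
          have hvmem : v ∈ A.direction ⊓ (ℝ ∙ (Y j))ᗮ := by rw [heq]; exact hvW
          have := (Submodule.mem_inf.mp hvmem).2
          rw [Submodule.mem_orthogonal_singleton_iff_inner_right] at this
          exact hvz this
        have hrank : Module.finrank ℝ A'.direction < Module.finrank ℝ A.direction :=
          Submodule.finrank_lt_finrank_of_lt hlt
        have hcov' : ∀ a ∈ Ω ∩ (A' : Set V), ∃ i ∈ G', 0 < ⟪Y i, a⟫ := by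
          rintro a ⟨haΩ, haA'⟩
          rw [hA'coe] at haA'
          obtain ⟨i, hiG, hipos⟩ := hcov a ⟨haΩ, haA'.2⟩
          refine ⟨i, Finset.mem_erase.mpr ⟨?_, hiG⟩, hipos⟩
          rintro rfl
          have := haA'.1
          simp only [Set.mem_setOf_eq] at this
          linarith
        exact ih (Module.finrank ℝ A'.direction) G' Y A' Ω (by omega) le_rfl hΩo hΩc hcov'
      rw [h1, h2]
      ring

lemma relOpen_of_isOpen (W : Submodule ℝ V) (O : Set V) (hO : IsOpen O) : RelOpen W O := by
  intro q hq w _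
  have hcont : Continuous (fun t : ℝ => q + t • w) := by continuity
  have h0 : (fun t : ℝ => q + t • w) 0 ∈ O := by simpa using hq
  obtain ⟨ε, hε, hball⟩ := Metric.isOpen_iff.mp (hO.preimage hcont) 0 h0
  exact ⟨ε, hε, fun t ht => hball (by simpa [Real.dist_eq] using ht)⟩

lemma ES_halfspace_eq_zero {ι : Type} [DecidableEq ι] (G : Finset ι) (Y : ι → V)
    (L : Submodule ℝ V) (hY : ∀ i ∈ G, Y i ∈ L)
    (h2 : ∀ a ∈ L, (∀ i ∈ G, 0 ≤ ⟪Y i, a⟫) → a = 0)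
    (z : V) (hzL : z ∈ L) (hz : z ≠ 0) :
    ES G Y {a | 0 < ⟪z, a⟫} = 0 := by
  have hzz : (0:ℝ) < ⟪z, z⟫ :=
    lt_of_le_of_ne real_inner_self_nonneg (Ne.symm (inner_self_ne_zero.mpr hz))
  set p : V := (⟪z, z⟫)⁻¹ • z with hpdef
  set A : AffineSubspace ℝ V := AffineSubspace.mk' p (ℝ ∙ z)ᗮ with hAdef
  have hAmem : ∀ a : V, a ∈ A ↔ ⟪z, a⟫ = 1 := by
    intro a
    rw [hAdef, AffineSubspace.mem_mk', vsub_eq_sub,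
      Submodule.mem_orthogonal_singleton_iff_inner_right, inner_sub_right, hpdef,
      real_inner_smul_right]
    rw [inv_mul_cancel₀ (ne_of_gt hzz)]
    constructor
    · intro h; linarith
    · intro h; linarith
  have hcov : ∀ a ∈ (Set.univ : Set V) ∩ (A : Set V), ∃ i ∈ G, 0 < ⟪Y i, a⟫ := by
    rintro a ⟨-, haA⟩
    by_contra hno
    push_neg at hno
    set b : V := (L.orthogonalProjection a : V) with hbdef
    have hsub : a - b ∈ Lᗮ := L.sub_starProjection_mem_orthogonal a
    have key : ∀ u ∈ L, ⟪u, b⟫ = ⟪u, a⟫ := by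
      intro u hu
      have h0 : ⟪u, a - b⟫ = 0 := (Submodule.mem_orthogonal L _).mp hsub u hu
      rw [inner_sub_right] at h0
      linarith
    have hbL : b ∈ L := (L.orthogonalProjection a).2
    have hneg : ∀ i ∈ G, 0 ≤ ⟪Y i, -b⟫ := by
      intro i hi
      rw [inner_neg_right, key (Y i) (hY i hi)]
      linarith [hno i hi]
    have hb0 : -b = 0 := h2 (-b) (neg_mem hbL) hneg
    have hb0' : b = 0 := neg_eq_zero.mp hb0
    have h1 : ⟪z, a⟫ = 1 := (hAmem a).mp haA
    have : ⟪z, a⟫ = 0 := by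
      rw [← key z hzL, hb0', inner_zero_right]
    rw [this] at h1
    norm_num at h1
  have hK3 := K3 (Module.finrank ℝ A.direction + G.card) (Module.finrank ℝ A.direction)
    G Y A Set.univ le_rfl le_rfl isOpen_univ convex_univ hcov
  rw [← hK3]
  refine ES_congr _ _ _ _ _ fun T _ => ?_
  constructor
  · rintro ⟨a, hapos, haCT⟩
    simp only [Set.mem_setOf_eq] at hapos
    refine ⟨(⟪z, a⟫)⁻¹ • a, ⟨trivial, ?_⟩, ?_⟩
    · rw [SetLike.mem_coe, hAmem, real_inner_smul_right, inv_mul_cancel₀ (ne_of_gt hapos)]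
    · intro i hi
      rw [real_inner_smul_right]
      exact mul_pos (inv_pos.mpr hapos) (haCT i hi)
  · rintro ⟨a, ⟨-, haA⟩, haCT⟩
    refine ⟨a, ?_, haCT⟩
    simp only [Set.mem_setOf_eq]
    rw [(hAmem a).mp haA]
    norm_num

/-- Explicit orthogonal projection away from `z`. -/
def pr (z y : V) : V := y - (⟪z, y⟫ / ⟪z, z⟫) • z

lemma pr_inner_eq (z y a : V) (haz : ⟪z, a⟫ = 0) : ⟪pr z y, a⟫ = ⟪y, a⟫ := by
  rw [pr, inner_sub_left, real_inner_smul_left, haz]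
  ring

lemma inner_z_pr (z : V) (hz : z ≠ 0) (y : V) : ⟪z, pr z y⟫ = 0 := by
  have hzz : ⟪z, z⟫ ≠ 0 := inner_self_ne_zero.mpr hz
  rw [pr, inner_sub_right, real_inner_smul_right, div_mul_cancel₀ _ hzz, sub_self]

lemma pr_swap (z y a : V) : ⟪pr z y, a⟫ = ⟪y, pr z a⟫ := by
  rw [pr, pr, inner_sub_left, inner_sub_right, real_inner_smul_left, real_inner_smul_right,
    real_inner_comm z y, real_inner_comm y z]
  ring

lemma ES_hyperplane {ι : Type} [DecidableEq ι] (G : Finset ι) (Y : ι → V) (z : V) (hz : z ≠ 0) :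
    ES G Y {a | ⟪z, a⟫ = 0} = ES G (fun i => pr z (Y i)) Set.univ := by
  refine ES_congr _ _ _ _ _ fun T _ => ?_
  constructor
  · rintro ⟨a, haz, haCT⟩
    simp only [Set.mem_setOf_eq] at haz
    refine ⟨a, trivial, fun i hi => ?_⟩
    rw [pr_inner_eq _ _ _ haz]
    exact haCT i hi
  · rintro ⟨a, -, haCT⟩
    refine ⟨pr z a, inner_z_pr z hz a, fun i hi => ?_⟩
    rw [← pr_swap]
    exact haCT i hi

lemma ES_relint {ι : Type} [DecidableEq ι] (G : Finset ι) :
    ∀ (m : ℕ) (Y : ι → V) (L : Submodule ℝ V), Module.finrank ℝ L = m →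
      (∀ i ∈ G, Y i ∈ L) → (∀ a ∈ L, (∀ i ∈ G, 0 ≤ ⟪Y i, a⟫) → a = 0) →
      ES G Y Set.univ = (-1) ^ m := by
  intro m
  induction m with
  | zero =>
    intro Y L hrk hY h2
    have hL : L = ⊥ := Submodule.finrank_eq_zero.mp hrk
    have hY0 : ∀ i ∈ G, Y i = 0 := fun i hi => by
      simpa [hL, Submodule.mem_bot] using hY i hi
    rw [ES, pow_zero]
    rw [Finset.sum_eq_single_of_mem ∅ (Finset.empty_mem_powerset G)]
    · rw [Finset.card_empty, pow_zero, one_mul, CT_empty, ind_of]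
      exact ⟨0, trivial, trivial⟩
    · intro T hT hTne
      obtain ⟨i, hi⟩ := Finset.nonempty_iff_ne_empty.mpr hTne
      rw [ind_of_not, mul_zero]
      rintro ⟨a, -, haCT⟩
      have := haCT i hi
      rw [hY0 i (Finset.mem_powerset.mp hT hi), inner_zero_left] at this
      exact lt_irrefl 0 this
  | succ m ih =>
    intro Y L hrk hY h2
    have hLne : L ≠ ⊥ := by
      intro h
      rw [h, finrank_bot] at hrk
      omega
    obtain ⟨z, hzL, hz⟩ := (Submodule.ne_bot_iff L).mp hLne
    have hD1 := ES_halfspace_eq_zero G Y L hY h2 z hzL hz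
    have hD2 := ES_halfspace_eq_zero G Y L hY h2 (-z) (neg_mem hzL) (neg_ne_zero.mpr hz)
    have hD2' : ES G Y {a | ⟪z, a⟫ < 0} = 0 := by
      rw [← hD2]
      refine ES_congr _ _ _ _ _ fun T _ => ?_
      have : {a : V | ⟪z, a⟫ < 0} = {a : V | 0 < ⟪-z, a⟫} := by
        ext a; simp only [Set.mem_setOf_eq, inner_neg_left]; constructor <;> intro <;> linarith
      rw [this]
    have hsum : ES G Y Set.univ + ES G Y {a | ⟪z, a⟫ = 0}
        = ES G Y {a | 0 < ⟪z, a⟫} + ES G Y {a | ⟪z, a⟫ < 0} := by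
      rw [ES, ES, ES, ES, ← Finset.sum_add_distrib, ← Finset.sum_add_distrib]
      refine Finset.sum_congr rfl fun T _ => ?_
      have h4 := fourIdentity ⊤ (CT Y T) (CT_convex Y T)
        (relOpen_of_isOpen ⊤ _ (CT_isOpen Y T)) z
        ⟨z, trivial, inner_self_ne_zero.mpr hz⟩
      have e1 : ind ((Set.univ ∩ CT Y T).Nonempty) = ind ((CT Y T).Nonempty) :=
        ind_congr (by rw [Set.univ_inter])
      have e2 : ind (({a : V | ⟪z, a⟫ = 0} ∩ CT Y T).Nonempty)
          = ind ((CT Y T ∩ {a : V | ⟪z, a⟫ = 0}).Nonempty) := ind_congr (by rw [Set.inter_comm])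
      have e3 : ind (({a : V | 0 < ⟪z, a⟫} ∩ CT Y T).Nonempty)
          = ind ((CT Y T ∩ {a : V | 0 < ⟪z, a⟫}).Nonempty) := ind_congr (by rw [Set.inter_comm])
      have e4 : ind (({a : V | ⟪z, a⟫ < 0} ∩ CT Y T).Nonempty)
          = ind ((CT Y T ∩ {a : V | ⟪z, a⟫ < 0}).Nonempty) := ind_congr (by rw [Set.inter_comm])
      rw [e1, e2, e3, e4]
      linear_combination ((-1:ℤ) ^ T.card) * h4
    have hEzero : ES G Y Set.univ = - ES G Y {a | ⟪z, a⟫ = 0} := by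
      rw [hD1, hD2'] at hsum
      linarith
    rw [hEzero, ES_hyperplane G Y z hz]
    set L' : Submodule ℝ V := L ⊓ (ℝ ∙ z)ᗮ with hL'def
    have hrk' : Module.finrank ℝ L' = m := by
      have hle : (ℝ ∙ z) ≤ L := (Submodule.span_singleton_le_iff_mem z L).mpr hzL
      have hdim : Module.finrank ℝ (ℝ ∙ z) + m = Module.finrank ℝ L := by
        rw [finrank_span_singleton hz, hrk]
        omega
      have := Submodule.finrank_add_inf_finrank_orthogonal' hle hdim
      rw [hL'def, inf_comm]
      exact this
    have hY' : ∀ i ∈ G, pr z (Y i) ∈ L' := by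
      intro i hi
      refine Submodule.mem_inf.mpr ⟨?_, ?_⟩
      · exact sub_mem (hY i hi) (Submodule.smul_mem L _ hzL)
      · rw [Submodule.mem_orthogonal_singleton_iff_inner_right]
        exact inner_z_pr z hz (Y i)
    have h2' : ∀ a ∈ L', (∀ i ∈ G, 0 ≤ ⟪pr z (Y i), a⟫) → a = 0 := by
      intro a haL' hpos
      obtain ⟨haL, haorth⟩ := Submodule.mem_inf.mp haL'
      rw [Submodule.mem_orthogonal_singleton_iff_inner_right] at haorth
      refine h2 a haL fun i hi => ?_
      have := hpos i hi
      rwa [pr_inner_eq _ _ _ haorth] at this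
    rw [ih (fun i => pr z (Y i)) L' hrk' hY' h2']
    rw [pow_succ]
    ring

section Hull

variable {ι : Type}

lemma exists_weights (T : Finset ι) (X : ι → V) (p : V)
    (hp : p ∈ convexHull ℝ (X '' ↑T)) :
    ∃ w : V → ℝ, (∀ y ∈ T.image X, 0 ≤ w y) ∧ (∑ y ∈ T.image X, w y = 1)
      ∧ (∑ y ∈ T.image X, w y • y = p) := by
  have himg : (X '' ↑T) = ↑(T.image X) := (Finset.coe_image).symm
  rw [himg] at hp
  obtain ⟨w, hw0, hw1, hwc⟩ := (Finset.mem_convexHull').mp hp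
  exact ⟨w, hw0, hw1, hwc⟩

lemma weight_inner_sum (T : Finset ι) (X : ι → V) (w : V → ℝ) (x a p : V)
    (hw1 : ∑ y ∈ T.image X, w y = 1) (hwc : ∑ y ∈ T.image X, w y • y = p) :
    ∑ y ∈ T.image X, w y * ⟪y - x, a⟫ = ⟪p - x, a⟫ := by
  have hkey : ∑ y ∈ T.image X, w y • (y - x) = p - x := by
    simp_rw [smul_sub]
    rw [Finset.sum_sub_distrib, ← Finset.sum_smul, hw1, hwc, one_smul]
  calc ∑ y ∈ T.image X, w y * ⟪y - x, a⟫
      = ∑ y ∈ T.image X, ⟪w y • (y - x), a⟫ := by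
        refine Finset.sum_congr rfl fun y _ => ?_
        rw [real_inner_smul_left]
    _ = ⟪∑ y ∈ T.image X, w y • (y - x), a⟫ := (sum_inner _ _ _).symm
    _ = ⟪p - x, a⟫ := by rw [hkey]

lemma gordan (T : Finset ι) (X : ι → V) (x : V) :
    x ∈ convexHull ℝ (X '' ↑T) ↔ ¬ ∃ a : V, ∀ i ∈ T, 0 < ⟪X i - x, a⟫ := by
  constructor
  · rintro hp ⟨a, ha⟩
    obtain ⟨w, hw0, hw1, hwc⟩ := exists_weights T X x hp
    have hsum : ∑ y ∈ T.image X, w y * ⟪y - x, a⟫ = 0 := by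
      rw [weight_inner_sum T X w x a x hw1 hwc, sub_self, inner_zero_left]
    have hterm : ∀ y ∈ T.image X, 0 ≤ w y * ⟪y - x, a⟫ := by
      intro y hy
      obtain ⟨i, hiT, rfl⟩ := Finset.mem_image.mp hy
      exact mul_nonneg (hw0 _ hy) (le_of_lt (ha i hiT))
    have hex : ∃ y ∈ T.image X, 0 < w y := by
      by_contra h
      push_neg at h
      have h0 : ∑ y ∈ T.image X, w y = 0 :=
        Finset.sum_eq_zero fun y hy => le_antisymm (h y hy) (hw0 y hy)
      rw [hw1] at h0
      norm_num at h0
    obtain ⟨y₀, hy₀mem, hy₀pos⟩ := hex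
    obtain ⟨i₀, hi₀T, hi₀⟩ := Finset.mem_image.mp hy₀mem
    have hpos : 0 < w y₀ * ⟪y₀ - x, a⟫ := by
      refine mul_pos hy₀pos ?_
      rw [← hi₀]
      exact ha i₀ hi₀T
    have : 0 < ∑ y ∈ T.image X, w y * ⟪y - x, a⟫ :=
      Finset.sum_pos' hterm ⟨y₀, hy₀mem, hpos⟩
    rw [hsum] at this
    exact lt_irrefl 0 this
  · intro hno
    by_contra hx
    apply hno
    have hfin : (X '' ↑T).Finite := (T.finite_toSet).image X
    have hclosed : IsClosed (convexHull ℝ (X '' ↑T)) := (hfin.isCompact_convexHull ℝ).isClosed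
    obtain ⟨f, u, hfx, hfb⟩ :=
      geometric_hahn_banach_point_closed (convex_convexHull ℝ _) hclosed hx
    refine ⟨(InnerProductSpace.toDual ℝ _).symm f, fun i hi => ?_⟩
    have hXi : X i ∈ convexHull ℝ (X '' ↑T) :=
      subset_convexHull ℝ _ ⟨i, by simpa using hi, rfl⟩
    have h1 : u < f (X i) := hfb _ hXi
    rw [real_inner_comm, InnerProductSpace.toDual_symm_apply, map_sub]
    linarith

lemma hull_restrict (T : Finset ι) (X : ι → V) (x a : V)
    (hall : ∀ i ∈ T, 0 ≤ ⟪X i - x, a⟫)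
    (hx : x ∈ convexHull ℝ (X '' ↑T)) :
    x ∈ convexHull ℝ (X '' ↑(T.filter (fun i => ⟪X i - x, a⟫ = 0))) := by
  obtain ⟨w, hw0, hw1, hwc⟩ := exists_weights T X x hx
  have hsum : ∑ y ∈ T.image X, w y * ⟪y - x, a⟫ = 0 := by
    rw [weight_inner_sum T X w x a x hw1 hwc, sub_self, inner_zero_left]
  have hterm0 : ∀ y ∈ T.image X, w y * ⟪y - x, a⟫ = 0 := by
    have hnn : ∀ y ∈ T.image X, 0 ≤ w y * ⟪y - x, a⟫ := by
      intro y hy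
      obtain ⟨i, hiT, rfl⟩ := Finset.mem_image.mp hy
      exact mul_nonneg (hw0 _ hy) (hall i hiT)
    exact (Finset.sum_eq_zero_iff_of_nonneg hnn).mp hsum
  have hcm : (T.image X).centerMass w id = x := by
    rw [Finset.centerMass_eq_of_sum_1 _ _ hw1]
    simpa using hwc
  rw [← Finset.centerMass_filter_ne_zero] at hcm
  have hsub : ∀ y ∈ (T.image X).filter (fun y => w y ≠ 0),
      id y ∈ X '' ↑(T.filter (fun i => ⟪X i - x, a⟫ = 0)) := by
    intro y hy
    obtain ⟨hys, hwy⟩ := Finset.mem_filter.mp hy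
    have hinner0 : ⟪y - x, a⟫ = 0 := by
      rcases mul_eq_zero.mp (hterm0 y hys) with h | h
      · exact absurd h hwy
      · exact h
    obtain ⟨i, hiT, rfl⟩ := Finset.mem_image.mp hys
    exact ⟨i, Finset.mem_coe.mpr (Finset.mem_filter.mpr ⟨hiT, hinner0⟩), rfl⟩
  have hmem := Finset.centerMass_mem_convexHull _
    (fun y hy => hw0 y (Finset.mem_filter.mp hy).1)
    (by rw [Finset.sum_filter_ne_zero, hw1]; norm_num) hsub
  rwa [hcm] at hmem

end Hull

section Intrinsic

variable {ι : Type} [Fintype ι]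

lemma span_dir_eq (X : ι → V) (x : V) (hxA : x ∈ affineSpan ℝ (Set.range X)) :
    Submodule.span ℝ (Set.range fun i => X i - x) = (affineSpan ℝ (Set.range X)).direction := by
  apply le_antisymm
  · rw [Submodule.span_le]
    rintro v ⟨i, rfl⟩
    have := AffineSubspace.vsub_mem_direction
      (subset_affineSpan ℝ _ (Set.mem_range_self i)) hxA
    simpa [vsub_eq_sub] using this
  · rw [direction_affineSpan, vectorSpan_def, Submodule.span_le]
    rintro u hu
    obtain ⟨u1, hu1, u2, hu2, rfl⟩ := Set.mem_vsub.mp hu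
    obtain ⟨i, rfl⟩ := hu1
    obtain ⟨j, rfl⟩ := hu2
    have : X i -ᵥ X j = (X i - x) - (X j - x) := by rw [vsub_eq_sub]; abel
    rw [this]
    exact sub_mem (Submodule.subset_span ⟨i, rfl⟩) (Submodule.subset_span ⟨j, rfl⟩)

lemma relint_no_support (X : ι → V) (x : V)
    (hx : x ∈ intrinsicInterior ℝ (convexHull ℝ (Set.range X)))
    (a : V) (ha : a ∈ (affineSpan ℝ (Set.range X)).direction)
    (hpos : ∀ i, 0 ≤ ⟪X i - x, a⟫) : a = 0 := by
  by_contra hane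
  have hspan : affineSpan ℝ (convexHull ℝ (Set.range X)) = affineSpan ℝ (Set.range X) :=
    affineSpan_convexHull _
  obtain ⟨y, hy, hyx⟩ := mem_intrinsicInterior.mp hx
  have haPi : a ∈ (affineSpan ℝ (convexHull ℝ (Set.range X))).direction := by
    rw [hspan]; exact ha
  set γ : ℝ → ↥(affineSpan ℝ (convexHull ℝ (Set.range X))) := fun t =>
    ⟨(-t • a) +ᵥ (y : V),
      AffineSubspace.vadd_mem_of_mem_direction (Submodule.smul_mem _ _ haPi) y.2⟩ with hγdef
  have hγc : Continuous γ := by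
    apply Continuous.subtype_mk
    exact ((continuous_id.neg).smul continuous_const).add continuous_const
  have hγ0 : γ 0 = y := by
    apply Subtype.ext
    show (-(0:ℝ) • a) +ᵥ (y : V) = ↑y
    rw [neg_zero, zero_smul, zero_vadd]
  have hop : IsOpen (γ ⁻¹'
      (interior ((↑) ⁻¹' (convexHull ℝ (Set.range X)) :
        Set ↥(affineSpan ℝ (convexHull ℝ (Set.range X)))))) :=
    isOpen_interior.preimage hγc
  have h0m : (0:ℝ) ∈ γ ⁻¹' (interior ((↑) ⁻¹' (convexHull ℝ (Set.range X)))) := by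
    rw [Set.mem_preimage, hγ0]; exact hy
  obtain ⟨ε, hε, hball⟩ := Metric.isOpen_iff.mp hop 0 h0m
  have htm : (ε/2 : ℝ) ∈ Metric.ball (0:ℝ) ε := by
    simp only [Metric.mem_ball, Real.dist_eq, sub_zero]
    rw [abs_of_pos (by linarith)]
    linarith
  have hmem2 : γ (ε/2) ∈ interior ((↑) ⁻¹' (convexHull ℝ (Set.range X))) := hball htm
  have hmemPi : (-(ε/2) • a) +ᵥ (y : V) ∈ convexHull ℝ (Set.range X) := by
    have h' : γ (ε/2) ∈ (↑) ⁻¹' (convexHull ℝ (Set.range X)) := interior_subset hmem2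
    exact h'
  rw [hyx] at hmemPi
  set p : V := (-(ε/2) • a) +ᵥ x with hpdef
  have hPieq : convexHull ℝ (Set.range X)
      = convexHull ℝ (X '' ↑(Finset.univ : Finset ι)) := by
    rw [Finset.coe_univ, Set.image_univ]
  rw [hPieq] at hmemPi
  obtain ⟨w, hw0, hw1, hwc⟩ := exists_weights Finset.univ X p hmemPi
  have hs := weight_inner_sum Finset.univ X w x a p hw1 hwc
  have hpx : p - x = -(ε/2) • a := by rw [hpdef]; simp [vadd_eq_add]
  rw [hpx, real_inner_smul_left] at hs
  have hneg : -(ε/2) * ⟪a, a⟫ < 0 := by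
    have : (0:ℝ) < ⟪a, a⟫ :=
      lt_of_le_of_ne real_inner_self_nonneg (Ne.symm (inner_self_ne_zero.mpr hane))
    nlinarith
  have hnn : 0 ≤ ∑ yv ∈ Finset.univ.image X, w yv * ⟪yv - x, a⟫ := by
    refine Finset.sum_nonneg fun yv hyv => ?_
    obtain ⟨i, -, rfl⟩ := Finset.mem_image.mp hyv
    exact mul_nonneg (hw0 _ hyv) (hpos i)
  linarith

lemma mem_intrinsicInterior_of_no_support (X : ι → V) (x : V)
    (hxPi : x ∈ convexHull ℝ (Set.range X))
    (h2 : ∀ a ∈ (affineSpan ℝ (Set.range X)).direction,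
      (∀ i, 0 ≤ ⟪X i - x, a⟫) → a = 0) :
    x ∈ intrinsicInterior ℝ (convexHull ℝ (Set.range X)) := by
  have hxA : x ∈ affineSpan ℝ (Set.range X) := convexHull_subset_affineSpan _ hxPi
  set L : Submodule ℝ V := (affineSpan ℝ (Set.range X)).direction with hLdef
  have hYL : ∀ i, X i - x ∈ L := fun i => by
    have := AffineSubspace.vsub_mem_direction
      (subset_affineSpan ℝ _ (Set.mem_range_self i)) hxA
    simpa [vsub_eq_sub] using this
  set K : Set ↥L := {v | (v : V) + x ∈ convexHull ℝ (Set.range X)} with hKdef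
  have h0K : (0 : ↥L) ∈ K := by
    simp only [hKdef, Set.mem_setOf_eq, Submodule.coe_zero, zero_add]
    exact hxPi
  have hgenK : ∀ i, (⟨X i - x, hYL i⟩ : ↥L) ∈ K := fun i => by
    simp only [hKdef, Set.mem_setOf_eq, sub_add_cancel]
    exact subset_convexHull ℝ _ (Set.mem_range_self i)
  have hKconv : Convex ℝ K := by
    intro v hv w hw a b ha hb hab
    simp only [hKdef, Set.mem_setOf_eq] at hv hw ⊢
    have hmem := (convex_convexHull ℝ (Set.range X)) hv hw ha hb hab
    have hx' : a • x + b • x = x := by rw [← add_smul, hab, one_smul]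
    have heq : a • ((v:V) + x) + b • ((w:V) + x) = ↑(a • v + b • w) + x := by
      push_cast
      rw [smul_add, smul_add]
      calc a • (v:V) + a • x + (b • (w:V) + b • x)
          = (a • (v:V) + b • (w:V)) + (a • x + b • x) := by abel
        _ = a • (v:V) + b • (w:V) + x := by rw [hx']
    rwa [heq] at hmem
  have hspanK : Submodule.span ℝ K = ⊤ := by
    rw [Submodule.eq_top_iff']
    intro v
    have hvL : (v:V) ∈ L := v.2
    have hLle : L ≤ Submodule.map L.subtype (Submodule.span ℝ K) := by
      have h1 : Submodule.span ℝ (Set.range fun i => X i - x)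
          ≤ Submodule.map L.subtype (Submodule.span ℝ K) := by
        rw [Submodule.span_le]
        rintro u ⟨i, rfl⟩
        exact ⟨⟨X i - x, hYL i⟩, Submodule.subset_span (hgenK i), rfl⟩
      calc L = Submodule.span ℝ (Set.range fun i => X i - x) := (span_dir_eq X x hxA).symm
        _ ≤ _ := h1
    obtain ⟨u, hu, huv⟩ := hLle hvL
    have huveq : u = v := Subtype.ext huv
    rwa [huveq] at hu
  have haffK : affineSpan ℝ K = ⊤ := by
    have hdirK : (affineSpan ℝ K).direction = ⊤ := by
      rw [direction_affineSpan]
      rw [eq_top_iff, ← hspanK]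
      refine Submodule.span_le.mpr fun kv hkv => ?_
      have := vsub_mem_vectorSpan ℝ hkv h0K
      simpa [vsub_eq_sub] using this
    rw [eq_top_iff]
    intro pnt _
    have h0aff : (0:↥L) ∈ affineSpan ℝ K := subset_affineSpan ℝ _ h0K
    have hd : (pnt - 0 : ↥L) ∈ (affineSpan ℝ K).direction := by rw [hdirK]; trivial
    have := AffineSubspace.vadd_mem_of_mem_direction hd h0aff
    simpa [vsub_eq_sub] using this
  have hintK : (interior K).Nonempty := by
    rw [Convex.interior_nonempty_iff_affineSpan_eq_top hKconv]
    exact haffK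
  obtain ⟨w₀, hw₀⟩ := hintK
  by_cases h0i : (0 : ↥L) ∈ interior K
  · set φ : ↥L →ᵃⁱ[ℝ] V := ((AffineIsometryEquiv.constVAdd ℝ V x).toAffineIsometry).comp
      (L.subtypeₗᵢ.toAffineIsometry) with hphidef
    have hphiapp : ∀ v : ↥L, φ v = x + ↑v := fun v => rfl
    have hphiK : φ '' K = convexHull ℝ (Set.range X) := by
      ext ypt
      constructor
      · rintro ⟨v, hv, rfl⟩
        rw [hphiapp]
        simp only [hKdef, Set.mem_setOf_eq] at hv
        rwa [add_comm]
      · intro hyp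
        have hyA : ypt ∈ affineSpan ℝ (Set.range X) := convexHull_subset_affineSpan _ hyp
        have hyL : ypt - x ∈ L := by
          have := AffineSubspace.vsub_mem_direction hyA hxA
          simpa [vsub_eq_sub] using this
        refine ⟨⟨ypt - x, hyL⟩, ?_, ?_⟩
        · simp only [hKdef, Set.mem_setOf_eq, sub_add_cancel]
          exact hyp
        · rw [hphiapp]
          simp
    rw [← hphiK, AffineIsometry.image_intrinsicInterior]
    exact ⟨0, interior_subset_intrinsicInterior h0i, by rw [hphiapp]; simp⟩
  · exfalso
    obtain ⟨f, hf⟩ := geometric_hahn_banach_open_point (hKconv.interior) isOpen_interior h0i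
    have hf0 : f (0:↥L) = 0 := map_zero f
    have hfw₀ : f w₀ < 0 := by
      have := hf w₀ hw₀
      rwa [hf0] at this
    have hfK : ∀ v ∈ K, f v ≤ 0 := by
      intro v hv
      by_contra hfv
      push_neg at hfv
      set t : ℝ := f v / (f v - f w₀) with htdef
      have hden : 0 < f v - f w₀ := by linarith
      have ht0 : 0 < t := div_pos hfv hden
      have ht1 : 1 - t ≥ 0 := by
        rw [htdef]
        rw [ge_iff_le, sub_nonneg, div_le_one hden]
        linarith
      have hu : t • w₀ + (1 - t) • v ∈ interior K :=
        hKconv.combo_interior_self_mem_interior hw₀ hv ht0 ht1 (by ring)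
      have hlt := hf _ hu
      rw [hf0, map_add, map_smul, map_smul, smul_eq_mul, smul_eq_mul] at hlt
      have hzero : t * f w₀ + (1 - t) * f v = 0 := by
        rw [htdef]
        field_simp
        ring
      linarith
    set a₀ : ↥L := (InnerProductSpace.toDual ℝ ↥L).symm f with ha₀def
    have ha₀app : ∀ v : ↥L, ⟪a₀, v⟫ = f v := fun v => InnerProductSpace.toDual_symm_apply
    have ha₀ne : a₀ ≠ 0 := by
      intro h
      have := ha₀app w₀
      rw [h, inner_zero_left] at this
      linarith
    have hae : ∀ i, 0 ≤ ⟪X i - x, -(↑a₀ : V)⟫ := by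
      intro i
      have hfY : f ⟨X i - x, hYL i⟩ ≤ 0 := hfK _ (hgenK i)
      have hinle : ⟪(↑a₀:V), X i - x⟫ ≤ 0 := by
        have := ha₀app ⟨X i - x, hYL i⟩
        rw [Submodule.coe_inner] at this
        rw [this]
        exact hfY
      rw [inner_neg_right]
      rw [real_inner_comm] at hinle
      linarith
    have hz := h2 (-(↑a₀:V)) (neg_mem a₀.2) hae
    have : (↑a₀ : V) = 0 := neg_eq_zero.mp hz
    exact ha₀ne (Subtype.ext this)

end Intrinsic

end

end CowanAux

open CowanAux

/-- **Cowan's formula** (Theorem 1.1). For points `X 0, …, X (n-1)` in `ℝ^d` and a point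
`x ∈ ℝ^d`, the alternating sum of the numbers `c_k(x)` of `k`-element subcollections whose
convex hull contains `x` equals `(-1)^{dim Π}` if `x` lies in the relative interior of
`Π = conv(X 0, …, X (n-1))`, and `0` otherwise. -/
theorem cowan_formula (n d : ℕ) (X : Fin n → EuclideanSpace ℝ (Fin d))
    (x : EuclideanSpace ℝ (Fin d)) :
    ∑ k ∈ Finset.Icc 1 n, (-1 : ℤ) ^ (k - 1) *
        ({I : Finset (Fin n) | I.card = k ∧ x ∈ convexHull ℝ (X '' ↑I)}.ncard : ℤ)
      = if x ∈ intrinsicInterior ℝ (convexHull ℝ (Set.range X))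
          then (-1 : ℤ) ^ adim (convexHull ℝ (Set.range X)) else 0 := by
  classical
  have hemptyhull : ∀ I : Finset (Fin n), I = ∅ → x ∉ convexHull ℝ (X '' ↑I) := by
    rintro I rfl h
    simp only [Finset.coe_empty, Set.image_empty, convexHull_empty] at h
    exact h
  -- Step 1 : rewrite the left-hand side as a sum over all subsets
  have hstep1 : (∑ k ∈ Finset.Icc 1 n, (-1 : ℤ) ^ (k - 1) *
        ({I : Finset (Fin n) | I.card = k ∧ x ∈ convexHull ℝ (X '' ↑I)}.ncard : ℤ))
      = ∑ I ∈ (Finset.univ : Finset (Finset (Fin n))),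
          (if x ∈ convexHull ℝ (X '' ↑I) then (-1 : ℤ) ^ (I.card - 1) else 0) := by
    have hset : ∀ k : ℕ, ({I : Finset (Fin n) | I.card = k ∧ x ∈ convexHull ℝ (X '' ↑I)}.ncard : ℤ)
        = ((Finset.univ.filter
            (fun I : Finset (Fin n) => I.card = k ∧ x ∈ convexHull ℝ (X '' ↑I))).card : ℤ) := by
      intro k
      congr 1
      rw [← Set.ncard_coe_finset]
      congr 1
      ext I
      simp [Finset.mem_filter]
    calc ∑ k ∈ Finset.Icc 1 n, (-1 : ℤ) ^ (k - 1) *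
          ({I : Finset (Fin n) | I.card = k ∧ x ∈ convexHull ℝ (X '' ↑I)}.ncard : ℤ)
        = ∑ k ∈ Finset.Icc 1 n, ∑ I ∈ Finset.univ.filter
            (fun I : Finset (Fin n) => I.card = k ∧ x ∈ convexHull ℝ (X '' ↑I)),
            (-1 : ℤ) ^ (k - 1) := by
          refine Finset.sum_congr rfl fun k _ => ?_
          rw [hset k, Finset.sum_const, nsmul_eq_mul, mul_comm]
      _ = ∑ k ∈ Finset.Icc 1 n, ∑ I ∈ (Finset.univ : Finset (Finset (Fin n))),
            (if (I.card = k ∧ x ∈ convexHull ℝ (X '' ↑I)) then (-1 : ℤ) ^ (k - 1) else 0) := by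
          refine Finset.sum_congr rfl fun k _ => ?_
          rw [Finset.sum_filter]
      _ = ∑ I ∈ (Finset.univ : Finset (Finset (Fin n))), ∑ k ∈ Finset.Icc 1 n,
            (if (I.card = k ∧ x ∈ convexHull ℝ (X '' ↑I)) then (-1 : ℤ) ^ (k - 1) else 0) :=
          Finset.sum_comm
      _ = ∑ I ∈ (Finset.univ : Finset (Finset (Fin n))),
            (if x ∈ convexHull ℝ (X '' ↑I) then (-1 : ℤ) ^ (I.card - 1) else 0) := by
          refine Finset.sum_congr rfl fun I _ => ?_
          by_cases hP : x ∈ convexHull ℝ (X '' ↑I)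
          · have hne : I.Nonempty := by
              rw [Finset.nonempty_iff_ne_empty]
              intro h
              exact hemptyhull I h hP
            have hk : I.card ∈ Finset.Icc 1 n := by
              rw [Finset.mem_Icc]
              constructor
              · exact Finset.card_pos.mpr hne
              · calc I.card ≤ (Finset.univ : Finset (Fin n)).card :=
                    Finset.card_le_card (Finset.subset_univ I)
                  _ = n := by rw [Finset.card_univ, Fintype.card_fin]
            rw [if_pos hP, Finset.sum_eq_single I.card]
            · rw [if_pos ⟨rfl, hP⟩]
            · intro k _ hkne
              rw [if_neg]
              rintro ⟨h1, -⟩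
              exact hkne h1.symm
            · intro habs
              exact absurd hk habs
          · rw [if_neg hP]
            refine Finset.sum_eq_zero fun k _ => ?_
            rw [if_neg]
            rintro ⟨-, h⟩
            exact hP h
  rw [hstep1]
  by_cases hxPi : x ∈ convexHull ℝ (Set.range X)
  swap
  · -- x outside the hull : both sides vanish
    rw [if_neg (fun h => hxPi (intrinsicInterior_subset h))]
    refine Finset.sum_eq_zero fun I _ => ?_
    rw [if_neg]
    intro h
    exact hxPi (convexHull_mono (Set.image_subset_range X ↑I) h)
  have hxA : x ∈ affineSpan ℝ (Set.range X) := convexHull_subset_affineSpan _ hxPi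
  have hYL : ∀ i, X i - x ∈ (affineSpan ℝ (Set.range X)).direction := fun i => by
    have := AffineSubspace.vsub_mem_direction
      (subset_affineSpan ℝ _ (Set.mem_range_self i)) hxA
    simpa [vsub_eq_sub] using this
  by_cases h2 : ∀ a ∈ (affineSpan ℝ (Set.range X)).direction,
      (∀ i, 0 ≤ ⟪X i - x, a⟫) → a = 0
  · -- interior case
    have hii : x ∈ intrinsicInterior ℝ (convexHull ℝ (Set.range X)) :=
      mem_intrinsicInterior_of_no_support X x hxPi h2
    rw [if_pos hii]
    have hadim : adim (convexHull ℝ (Set.range X))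
        = Module.finrank ℝ (affineSpan ℝ (Set.range X)).direction := by
      show Module.finrank ℝ (affineSpan ℝ (convexHull ℝ (Set.range X))).direction = _
      rw [affineSpan_convexHull]
    rw [hadim]
    -- nonempty index type
    have hrne : (Set.range X).Nonempty := by
      by_contra h
      rw [Set.not_nonempty_iff_eq_empty] at h
      rw [h, convexHull_empty] at hxPi
      exact hxPi
    haveI : Nonempty (Fin n) := Set.range_nonempty_iff_nonempty.mp hrne
    -- Gordan conversion term by term
    have hterm : ∀ I : Finset (Fin n),
        (if x ∈ convexHull ℝ (X '' ↑I) then (-1 : ℤ) ^ (I.card - 1) else 0)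
        = -((-1 : ℤ) ^ I.card * ind (x ∈ convexHull ℝ (X '' ↑I))) := by
      intro I
      by_cases hP : x ∈ convexHull ℝ (X '' ↑I)
      · have hne : I.Nonempty := by
          rw [Finset.nonempty_iff_ne_empty]
          intro h
          exact hemptyhull I h hP
        obtain ⟨c, hcc⟩ : ∃ c, I.card = c + 1 :=
          ⟨I.card - 1, (Nat.succ_pred_eq_of_pos (Finset.card_pos.mpr hne)).symm⟩
        rw [if_pos hP, ind_of _ hP, mul_one, hcc, Nat.add_sub_cancel, pow_succ]
        ring
      · rw [if_neg hP, ind_of_not _ hP, mul_zero, neg_zero]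
    have hg : ∀ I : Finset (Fin n), ind (x ∈ convexHull ℝ (X '' ↑I))
        = 1 - ind ((Set.univ ∩ CT (fun i => X i - x) I).Nonempty) := by
      intro I
      have hiff : (Set.univ ∩ CT (fun i => X i - x) I).Nonempty
          ↔ ∃ a, ∀ i ∈ I, 0 < ⟪X i - x, a⟫ := by
        constructor
        · rintro ⟨a, -, haCT⟩
          exact ⟨a, haCT⟩
        · rintro ⟨a, ha⟩
          exact ⟨a, trivial, ha⟩
      by_cases hex : ∃ a, ∀ i ∈ I, 0 < ⟪X i - x, a⟫
      · rw [ind_of_not _ (fun hP => (gordan I X x).mp hP hex), ind_of _ (hiff.mpr hex)]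
        ring
      · rw [ind_of _ ((gordan I X x).mpr hex), ind_of_not _ (fun h => hex (hiff.mp h))]
        ring
    calc ∑ I ∈ (Finset.univ : Finset (Finset (Fin n))),
          (if x ∈ convexHull ℝ (X '' ↑I) then (-1 : ℤ) ^ (I.card - 1) else 0)
        = ∑ I ∈ (Finset.univ : Finset (Finset (Fin n))),
            (-((-1 : ℤ) ^ I.card)
              + (-1 : ℤ) ^ I.card * ind ((Set.univ ∩ CT (fun i => X i - x) I).Nonempty)) := by
          refine Finset.sum_congr rfl fun I _ => ?_
          rw [hterm I, hg I]
          ring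
      _ = -(∑ I ∈ (Finset.univ : Finset (Finset (Fin n))), (-1 : ℤ) ^ I.card)
            + ES Finset.univ (fun i => X i - x) Set.univ := by
          rw [Finset.sum_add_distrib, ES, Finset.powerset_univ]
          congr 1
          rw [← Finset.sum_neg_distrib]
      _ = (-1 : ℤ) ^ Module.finrank ℝ (affineSpan ℝ (Set.range X)).direction := by
          rw [← Finset.powerset_univ,
            Finset.sum_powerset_neg_one_pow_card_of_nonempty Finset.univ_nonempty, neg_zero,
            zero_add]
          exact ES_relint Finset.univ (Module.finrank ℝ (affineSpan ℝ (Set.range X)).direction)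
            (fun i => X i - x) (affineSpan ℝ (Set.range X)).direction rfl
            (fun i _ => hYL i) (fun a ha hpos => h2 a ha (fun i => hpos i (Finset.mem_univ i)))
  · -- boundary case : supporting functional exists
    push_neg at h2
    obtain ⟨a, haL, hapos, hane⟩ := h2
    rw [if_neg (fun hii => hane (relint_no_support X x hii a haL hapos))]
    -- a nonzero pairing index
    have hjex : ∃ j, ⟪X j - x, a⟫ ≠ 0 := by
      by_contra h
      push_neg at h
      apply hane
      have haspan : a ∈ Submodule.span ℝ (Set.range fun i => X i - x) := by
        rw [span_dir_eq X x hxA]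
        exact haL
      set f : EuclideanSpace ℝ (Fin d) →L[ℝ] ℝ :=
        InnerProductSpace.toDual ℝ (EuclideanSpace ℝ (Fin d)) a with hfdef
      have hker : Submodule.span ℝ (Set.range fun i => X i - x) ≤ LinearMap.ker (f : EuclideanSpace ℝ (Fin d) →ₗ[ℝ] ℝ) := by
        rw [Submodule.span_le]
        rintro u ⟨i, rfl⟩
        rw [SetLike.mem_coe, LinearMap.mem_ker]
        show ⟪a, X i - x⟫ = 0
        rw [real_inner_comm]
        exact h i
      have : f a = 0 := hker haspan
      have : ⟪a, a⟫ = 0 := this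
      exact inner_self_eq_zero.mp this
    obtain ⟨j, hj⟩ := hjex
    have hkey : ∀ I : Finset (Fin n), (x ∈ convexHull ℝ (X '' ↑I))
        ↔ (x ∈ convexHull ℝ (X '' ↑(I.filter fun i => ⟪X i - x, a⟫ = 0))) := by
      intro I
      constructor
      · intro hmem
        exact hull_restrict I X x a (fun i _ => hapos i) hmem
      · intro hmem
        refine convexHull_mono (Set.image_mono (f := X) ?_) hmem
        exact_mod_cast Finset.filter_subset _ I
    set U' : Finset (Fin n) := (Finset.univ : Finset (Fin n)).erase j with hU'def
    have hjU' : j ∉ U' := Finset.notMem_erase _ _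
    have huniv : (Finset.univ : Finset (Fin n)) = insert j U' :=
      (Finset.insert_erase (Finset.mem_univ j)).symm
    rw [← Finset.powerset_univ, huniv, Finset.sum_powerset_insert hjU',
      ← Finset.sum_add_distrib]
    refine Finset.sum_eq_zero fun T hT => ?_
    have hjT : j ∉ T := fun hmem => hjU' (Finset.mem_powerset.mp hT hmem)
    have hfil : (insert j T).filter (fun i => ⟪X i - x, a⟫ = 0)
        = T.filter (fun i => ⟪X i - x, a⟫ = 0) := by
      rw [Finset.filter_insert, if_neg hj]
    have hPins : (x ∈ convexHull ℝ (X '' ↑(insert j T))) ↔ (x ∈ convexHull ℝ (X '' ↑T)) := by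
      rw [hkey (insert j T), hfil, ← hkey T]
    by_cases hP : x ∈ convexHull ℝ (X '' ↑T)
    · have hP' : x ∈ convexHull ℝ (X '' ↑(insert j T)) := hPins.mpr hP
      have hne : T.Nonempty := by
        rw [Finset.nonempty_iff_ne_empty]
        intro h
        exact hemptyhull T h hP
      have hcins : (insert j T).card = T.card + 1 := Finset.card_insert_of_notMem hjT
      obtain ⟨c, hcc⟩ : ∃ c, T.card = c + 1 :=
        ⟨T.card - 1, (Nat.succ_pred_eq_of_pos (Finset.card_pos.mpr hne)).symm⟩
      rw [if_pos hP, if_pos hP', hcins, Nat.add_sub_cancel, hcc, Nat.add_sub_cancel, pow_succ]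
      ring
    · rw [if_neg hP, if_neg (fun h => hP (hPins.mp h)), add_zero]
end

section
/- Let X_1,…,X_n be points in ℝ^d and let ∅ ≠ I ⊆ J ⊆ {1,…,n}. Then the following are equivalent: (i) Π_I is a clean face of Π_J, i.e. Π_I is a face of Π_J and Π_I contains none of the points X_k with k ∈ J∖I; (ii) aff(X_i : i ∈ I) ∩ conv(X_k : k ∈ J∖I) = ∅, i.e. the affine hull of the points indexed by I is disjoint from the convex hull of the points indexed by J∖I (with the convention that the convex hull of an empty collection is empty). -/
open Pointwise

/-- `F` is a face of the polytope `P`: either `F = P` (the improper face), or `F` is the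
nonempty intersection of `P` with a hyperplane bounding a closed half-space containing `P`. -/
def IsFace {d : ℕ} (P F : Set (EuclideanSpace ℝ (Fin d))) : Prop :=
  F = P ∨ (F.Nonempty ∧ ∃ (f : EuclideanSpace ℝ (Fin d) →ₗ[ℝ] ℝ) (c : ℝ),
    f ≠ 0 ∧ (∀ x ∈ P, f x ≤ c) ∧ F = {x ∈ P | f x = c})

/-- If `f ≤ c` on a finite set `s` and `x ∈ conv s` has `f x = c`, then `x` lies in
the convex hull of the points of `s` where `f` attains `c`. -/
lemma mem_hull_eq_level {d : ℕ} (s : Finset (EuclideanSpace ℝ (Fin d)))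
    (f : EuclideanSpace ℝ (Fin d) →ₗ[ℝ] ℝ) (c : ℝ) (hle : ∀ y ∈ s, f y ≤ c)
    {x : EuclideanSpace ℝ (Fin d)} (hx : x ∈ convexHull ℝ (s : Set (EuclideanSpace ℝ (Fin d))))
    (hxc : f x = c) :
    x ∈ convexHull ℝ {y ∈ (s : Set (EuclideanSpace ℝ (Fin d))) | f y = c} := by
  rw [s.convexHull_eq] at hx
  obtain ⟨w, hw0, hw1, hwx⟩ := hx
  have hxe : x = ∑ y ∈ s, w y • y := by
    rw [← hwx, Finset.centerMass_eq_of_sum_1 _ _ hw1]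
    simp
  have hfx : ∑ y ∈ s, w y * f y = c := by
    rw [← hxc, hxe, map_sum]
    simp [smul_eq_mul]
  have hsum : ∑ y ∈ s, w y * (c - f y) = 0 := by
    have h1 : ∑ y ∈ s, w y * (c - f y)
        = (∑ y ∈ s, w y * c) - ∑ y ∈ s, w y * f y := by
      rw [← Finset.sum_sub_distrib]
      exact Finset.sum_congr rfl fun y _ => by ring
    rw [h1, ← Finset.sum_mul, hw1, one_mul, hfx, sub_self]
  have hzero : ∀ y ∈ s, w y * (c - f y) = 0 :=
    (Finset.sum_eq_zero_iff_of_nonneg fun y hy =>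
      mul_nonneg (hw0 y hy) (sub_nonneg.2 (hle y hy))).1 hsum
  have hx' : ({y ∈ s | w y ≠ 0} : Finset _).centerMass w id = x := by
    rw [Finset.centerMass_filter_ne_zero]; exact hwx
  rw [← hx']
  refine Finset.centerMass_mem_convexHull _ (fun y hy => hw0 y (Finset.mem_filter.1 hy).1)
    ?_ (fun y hy => ?_)
  · rw [Finset.sum_filter_ne_zero, hw1]; exact one_pos
  · obtain ⟨hys, hyw⟩ := Finset.mem_filter.1 hy
    refine ⟨hys, ?_⟩
    have := hzero y hys
    rcases mul_eq_zero.1 this with h | h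
    · exact absurd h hyw
    · simp only [id_eq]
      linarith [sub_eq_zero.1 h]

/-- **Lemma 3.2.** For `∅ ≠ I ⊆ J ⊆ {1,…,n}` the following are equivalent:
(i) `Π_I` is a clean face of `Π_J`, i.e. a face of `Π_J` containing none of the points `X k`
with `k ∈ J \ I`;
(ii) the affine hull of `(X i : i ∈ I)` is disjoint from `conv(X k : k ∈ J \ I)`. -/
theorem clean_face_iff (n d : ℕ) (X : Fin n → EuclideanSpace ℝ (Fin d))
    (I J : Finset (Fin n)) (hI : I.Nonempty) (hIJ : I ⊆ J) :
    (IsFace (convexHull ℝ (X '' ↑J)) (convexHull ℝ (X '' ↑I)) ∧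
        ∀ k ∈ J \ I, X k ∉ convexHull ℝ (X '' ↑I))
      ↔ (↑(affineSpan ℝ (X '' ↑I)) ∩ convexHull ℝ (X '' ↑(J \ I))
          : Set (EuclideanSpace ℝ (Fin d))) = ∅ := by
  classical
  constructor
  · rintro ⟨hface, hclean⟩
    rw [Set.eq_empty_iff_forall_notMem]
    rintro y ⟨hy1, hy2⟩
    have hJIne : ((X '' ↑(J \ I))).Nonempty := convexHull_nonempty_iff.1 ⟨y, hy2⟩
    obtain ⟨_, k0, hk0, rfl⟩ := hJIne
    rw [Finset.mem_coe] at hk0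
    rcases hface with heq | ⟨hne, f, c, hf0, hle, hFeq⟩
    · exact hclean k0 hk0 (heq ▸ subset_convexHull ℝ _
        ⟨k0, Finset.mem_coe.2 (Finset.sdiff_subset hk0), rfl⟩)
    · -- f equals c on X '' I
      have hfI : ∀ i ∈ I, f (X i) = c := by
        intro i hi
        have hXi : X i ∈ convexHull ℝ (X '' ↑I) :=
          subset_convexHull ℝ _ ⟨i, Finset.mem_coe.2 hi, rfl⟩
        rw [hFeq] at hXi
        exact hXi.2
      -- f equals c on the affine span of X '' I
      have haff : ∀ z ∈ affineSpan ℝ (X '' ↑I), f z = c := by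
        intro z hz
        have hQ : affineSpan ℝ (X '' ↑I) ≤
            AffineSubspace.comap f.toAffineMap (AffineSubspace.mk' c ⊥) := by
          refine affineSpan_le.mpr ?_
          rintro _ ⟨i, hi, rfl⟩
          rw [Finset.mem_coe] at hi
          simp only [SetLike.mem_coe, AffineSubspace.mem_comap,
            AffineSubspace.mem_mk', Submodule.mem_bot, vsub_eq_sub,
            sub_eq_zero]
          exact hfI i hi
        have := hQ hz
        simpa [AffineSubspace.mem_comap, AffineSubspace.mem_mk',
          sub_eq_zero] using this
      have hyc : f y = c := haff y hy1
      -- f < c on X '' (J \ I)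
      have hlt : ∀ p ∈ X '' (↑(J \ I) : Set (Fin n)), f p < c := by
        rintro _ ⟨k, hk, rfl⟩
        rw [Finset.mem_coe, Finset.mem_sdiff] at hk
        have hXk : X k ∈ convexHull ℝ (X '' ↑J) :=
          subset_convexHull ℝ _ ⟨k, Finset.mem_coe.2 hk.1, rfl⟩
        have h1 : f (X k) ≤ c := hle _ hXk
        rcases lt_or_eq_of_le h1 with h | h
        · exact h
        · exact absurd (hFeq ▸ (⟨hXk, h⟩ : X k ∈ {x ∈ convexHull ℝ (X '' ↑J) | f x = c}))
            (hclean k (Finset.mem_sdiff.2 hk))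
      have : y ∈ {w | f w < c} :=
        convexHull_min hlt (convex_halfSpace_lt f.isLinear c) hy2
      exact absurd hyc (ne_of_lt this)
  · intro hdisj
    have hclean : ∀ k ∈ J \ I, X k ∉ convexHull ℝ (X '' ↑I) := by
      intro k hk hkmem
      have h1 : X k ∈ (affineSpan ℝ (X '' ↑I) : Set _) :=
        convexHull_subset_affineSpan _ hkmem
      have h2 : X k ∈ convexHull ℝ (X '' ↑(J \ I)) :=
        subset_convexHull ℝ _ ⟨k, Finset.mem_coe.2 hk, rfl⟩
      exact Set.eq_empty_iff_forall_notMem.1 hdisj (X k) ⟨h1, h2⟩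
    refine ⟨?_, hclean⟩
    by_cases hJIe : J \ I = ∅
    · left
      have hJI : J = I := Finset.Subset.antisymm
        (Finset.sdiff_eq_empty_iff_subset.1 hJIe) hIJ
      rw [hJI]
    · right
      obtain ⟨k1, hk1⟩ := Finset.nonempty_iff_ne_empty.2 hJIe
      obtain ⟨i0, hi0⟩ := hI
      -- separation
      have hdisjS : Disjoint (convexHull ℝ (X '' ↑(J \ I)))
          (↑(affineSpan ℝ (X '' ↑I)) : Set (EuclideanSpace ℝ (Fin d))) := by
        rw [Set.disjoint_iff_inter_eq_empty, Set.inter_comm]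
        exact hdisj
      obtain ⟨f, u, v, hfu, huv, hfv⟩ := geometric_hahn_banach_compact_closed
        (convex_convexHull ℝ _) ((Set.toFinite (X '' ↑(J \ I))).isCompact_convexHull ℝ)
        (affineSpan ℝ (X '' ↑I)).convex
        (affineSpan ℝ (X '' ↑I)).closed_of_finiteDimensional hdisjS
      set c : ℝ := f (X i0) with hc
      have hXi0 : X i0 ∈ affineSpan ℝ (X '' ↑I) :=
        subset_affineSpan ℝ _ ⟨i0, Finset.mem_coe.2 hi0, rfl⟩
      -- f is constant (= c) on the affine span
      have hconst : ∀ q ∈ affineSpan ℝ (X '' ↑I), f q = c := by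
        intro q hq
        by_contra hne'
        have ha : f q - c ≠ 0 := sub_ne_zero.2 hne'
        set t : ℝ := (v - 1 - c) / (f q - c) with ht
        have hz : t • (q -ᵥ X i0) +ᵥ X i0 ∈ affineSpan ℝ (X '' ↑I) :=
          AffineSubspace.smul_vsub_vadd_mem _ t hq hXi0 hXi0
        have hv := hfv _ hz
        have hfz : f (t • (q -ᵥ X i0) +ᵥ X i0) = t * (f q - c) + c := by
          simp only [vsub_eq_sub, vadd_eq_add, map_add, map_smul, map_sub,
            smul_eq_mul, hc]
        rw [hfz, ht, div_mul_cancel₀ _ ha] at hv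
        linarith
      have hvc : v < c := hfv _ hXi0
      -- f < c on the points indexed by J \ I
      have hltJI : ∀ k ∈ J \ I, f (X k) < c := by
        intro k hk
        have : f (X k) < u := hfu _ (subset_convexHull ℝ _ ⟨k, Finset.mem_coe.2 hk, rfl⟩)
        linarith
      refine ⟨⟨X i0, subset_convexHull ℝ _ ⟨i0, Finset.mem_coe.2 hi0, rfl⟩⟩,
        f.toLinearMap, c, ?_, ?_, ?_⟩
      · intro h0
        have h1 : f (X k1) = 0 := by
          have := congrArg (fun g => g (X k1)) h0; simpa using this
        have h2 : f (X i0) = 0 := by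
          have := congrArg (fun g => g (X i0)) h0; simpa using this
        have h3 := hltJI k1 hk1
        rw [h1, hc, h2] at h3
        exact lt_irrefl 0 h3
      · -- f ≤ c on conv (X '' J)
        intro x hx
        have hsub : X '' ↑J ⊆ {w | f w ≤ c} := by
          rintro _ ⟨j, hj, rfl⟩
          rw [Finset.mem_coe] at hj
          by_cases hjI : j ∈ I
          · exact le_of_eq (hconst (X j) (subset_affineSpan ℝ _ ⟨j, Finset.mem_coe.2 hjI, rfl⟩))
          · exact le_of_lt (hltJI j (Finset.mem_sdiff.2 ⟨hj, hjI⟩))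
        have hlin : IsLinearMap ℝ (fun w => f w) := ⟨fun a b => map_add f a b, fun r a => map_smul f r a⟩
        exact convexHull_min hsub (convex_halfSpace_le hlin c) hx
      · -- equality of the face and the level set
        apply Set.Subset.antisymm
        · intro x hx
          refine ⟨convexHull_mono (Set.image_mono hIJ) hx, ?_⟩
          have hxa : x ∈ (affineSpan ℝ (X '' ↑I) : Set _) :=
            convexHull_subset_affineSpan _ hx
          exact hconst x hxa
        · rintro x ⟨hx, hxc⟩
          have hsJ : ((J.image X : Finset (EuclideanSpace ℝ (Fin d))) : Set _) = X '' ↑J :=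
            Finset.coe_image
          have hx' : x ∈ convexHull ℝ ((J.image X : Finset (EuclideanSpace ℝ (Fin d))) : Set _) := by
            rw [hsJ]; exact hx
          have hle' : ∀ y ∈ J.image X, f.toLinearMap y ≤ c := by
            intro y hy
            obtain ⟨j, hj, rfl⟩ := Finset.mem_image.1 hy
            by_cases hjI : j ∈ I
            · exact le_of_eq (hconst (X j) (subset_affineSpan ℝ _ ⟨j, Finset.mem_coe.2 hjI, rfl⟩))
            · exact le_of_lt (hltJI j (Finset.mem_sdiff.2 ⟨hj, hjI⟩))
          have hmem := mem_hull_eq_level (J.image X) f.toLinearMap c hle' hx' hxc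
          refine convexHull_mono ?_ hmem
          rintro y ⟨hy, hyc⟩
          rw [hsJ] at hy
          obtain ⟨j, hj, rfl⟩ := hy
          rw [Finset.mem_coe] at hj
          by_cases hjI : j ∈ I
          · exact ⟨j, Finset.mem_coe.2 hjI, rfl⟩
          · exact absurd hyc (ne_of_lt (hltJI j (Finset.mem_sdiff.2 ⟨hj, hjI⟩)))
end
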